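/- Let I ⊆ S be a monomial ideal with linear quotients with respect to the ordering m_1, ..., m_t of its minimal monomial generators, and let A_i be the associated critical-index sets. Then every monomial w ∈ I can be written in exactly one way as w = u·m_i where 1 ≤ i ≤ t and u is a monomial with supp(u) ∩ A_i = ∅. -/

import Mathlib

open MvPolynomial

/-- Let `I ⊆ S = k[x_1,…,x_n]` be a monomial ideal with linear quotients
with respect to the ordering `m_1, …, m_t` of its minimal monomial generators (encoded by
exponent vectors), and let `A_i = { j : x_j ∈ (m_1,…,m_{i−1}) : m_i }` be the associated
critical-index sets.  Then every monomial `w ∈ I` can be written in exactly one way as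
`w = u·m_i` where `1 ≤ i ≤ t` and `u` is a monomial with `supp(u) ∩ A_i = ∅`. -/
theorem stmt_4 (k : Type) [Field k] (n t : ℕ)
    (m : Fin t → (Fin n →₀ ℕ))
    (hmin : ∀ i j : Fin t, i ≠ j → ¬ m i ≤ m j)
    -- linear quotients: each colon ideal is generated by a subset of the variables
    (hLQ : ∀ i : Fin t, ∃ V : Set (Fin n),
      Submodule.colon
        (Ideal.span ((fun j => monomial (m j) (1 : k)) '' {j | j < i}))
        (Ideal.span {monomial (m i) (1 : k)})
      = Ideal.span ((fun g => (X g : MvPolynomial (Fin n) k)) '' V)) :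
    ∀ α : Fin n →₀ ℕ,
      monomial α (1 : k) ∈ Ideal.span (Set.range fun i => monomial (m i) (1 : k)) →
      ∃! p : Fin t × (Fin n →₀ ℕ),
        α = p.2 + m p.1 ∧
        ∀ j ∈ p.2.support,
          (X j : MvPolynomial (Fin n) k) ∉
            Submodule.colon
              (Ideal.span ((fun l => monomial (m l) (1 : k)) '' {l | l < p.1}))
              (Ideal.span {monomial (m p.1) (1 : k)}) := by
  classical
  intro α hα
  -- membership in the full monomial ideal gives some i with m i ≤ α
  have hstart : ∃ i : Fin t, m i ≤ α := by
    have : (Set.range fun i => monomial (m i) (1 : k)) =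
        (fun s => monomial s (1 : k)) '' (Set.range m) := by
      rw [← Set.range_comp]; rfl
    rw [this, mem_ideal_span_monomial_image] at hα
    obtain ⟨si, hsi, hle⟩ := hα α (by simp [support_monomial])
    obtain ⟨i, rfl⟩ := hsi
    exact ⟨i, hle⟩
  -- reformulation of the truncated ideals as monomial-image ideals
  have hspan : ∀ i : Fin t,
      Ideal.span ((fun l => monomial (m l) (1 : k)) '' {l | l < i}) =
      Ideal.span ((fun s => monomial s (1 : k)) '' (m '' {l | l < i})) := by
    intro i; rw [Set.image_image]
  -- a monomial divisible by m l with l < i lies in the truncated ideal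
  have hmem : ∀ (i l : Fin t) (β : Fin n →₀ ℕ), l < i → m l ≤ β →
      monomial β (1 : k) ∈
        Ideal.span ((fun l => monomial (m l) (1 : k)) '' {l | l < i}) := by
    intro i l β hl hle
    rw [hspan, mem_ideal_span_monomial_image]
    intro xi hxi
    rw [support_monomial, if_neg one_ne_zero, Finset.mem_singleton] at hxi
    exact ⟨m l, ⟨l, hl, rfl⟩, hxi ▸ hle⟩
  -- existence, by strong descent on the index
  have key : ∀ N : ℕ, ∀ i : Fin t, i.val < N → m i ≤ α →
      ∃ p : Fin t × (Fin n →₀ ℕ),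
        α = p.2 + m p.1 ∧
        ∀ j ∈ p.2.support,
          (X j : MvPolynomial (Fin n) k) ∉
            Submodule.colon
              (Ideal.span ((fun l => monomial (m l) (1 : k)) '' {l | l < p.1}))
              (Ideal.span {monomial (m p.1) (1 : k)}) := by
    intro N
    induction N with
    | zero => intro i hi; omega
    | succ N ih =>
      intro i hi hle
      by_cases hgood : ∀ j ∈ (α - m i).support,
          (X j : MvPolynomial (Fin n) k) ∉
            Submodule.colon
              (Ideal.span ((fun l => monomial (m l) (1 : k)) '' {l | l < i}))
              (Ideal.span {monomial (m i) (1 : k)})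
      · exact ⟨(i, α - m i), (tsub_add_cancel_of_le hle).symm, hgood⟩
      · push_neg at hgood
        obtain ⟨j, hj, hjc⟩ := hgood
        rw [Ideal.mem_colon_span_singleton] at hjc
        have hX : (X j : MvPolynomial (Fin n) k) * monomial (m i) 1 =
            monomial (Finsupp.single j 1 + m i) 1 := by
          rw [X, monomial_mul, one_mul]
        rw [hX, hspan, mem_ideal_span_monomial_image] at hjc
        obtain ⟨si, ⟨l, hl, rfl⟩, hsle⟩ := hjc
          (Finsupp.single j 1 + m i) (by simp [support_monomial])
        have hjα : Finsupp.single j 1 + m i ≤ α := by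
          intro g
          rcases eq_or_ne g j with rfl | hg
          · have : 1 ≤ (α - m i) g := by
              have := Finsupp.mem_support_iff.mp hj; omega
            have h2 := hle g
            simp only [Finsupp.coe_tsub, Pi.sub_apply] at this
            simp only [Finsupp.add_apply, Finsupp.single_eq_same]
            omega
          · simpa [Finsupp.single_eq_of_ne hg] using hle g
        exact ih l (by have h1 : l.val < i.val := hl; omega) (hsle.trans hjα)
  obtain ⟨i0, hi0⟩ := hstart
  obtain ⟨p, hp⟩ := key (i0.val + 1) i0 (by omega) hi0
  refine ⟨p, hp, ?_⟩
  -- uniqueness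
  have huniq : ∀ q r : Fin t × (Fin n →₀ ℕ),
      (α = q.2 + m q.1 ∧ ∀ j ∈ q.2.support,
          (X j : MvPolynomial (Fin n) k) ∉
            Submodule.colon
              (Ideal.span ((fun l => monomial (m l) (1 : k)) '' {l | l < q.1}))
              (Ideal.span {monomial (m q.1) (1 : k)})) →
      (α = r.2 + m r.1 ∧ ∀ j ∈ r.2.support,
          (X j : MvPolynomial (Fin n) k) ∉
            Submodule.colon
              (Ideal.span ((fun l => monomial (m l) (1 : k)) '' {l | l < r.1}))
              (Ideal.span {monomial (m r.1) (1 : k)})) →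
      r.1 < q.1 → False := by
    rintro ⟨i, u⟩ ⟨l, v⟩ ⟨hqe, hqs⟩ ⟨hre, _⟩ hlt
    -- m l ≤ α with l < i, so monomial α ∈ truncated ideal at i; hence
    -- monomial u ∈ colon, which is spanned by variables; contradiction with hqs
    have hαmem : monomial α (1 : k) ∈
        Ideal.span ((fun g => monomial (m g) (1 : k)) '' {g | g < i}) :=
      hmem i l α hlt (hre ▸ le_add_self)
    have hu : monomial u (1 : k) ∈
        Submodule.colon
          (Ideal.span ((fun g => monomial (m g) (1 : k)) '' {g | g < i}))
          (Ideal.span {monomial (m i) (1 : k)}) := by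
      rw [Ideal.mem_colon_span_singleton, monomial_mul, one_mul, ← hqe]
      exact hαmem
    obtain ⟨V, hV⟩ := hLQ i
    rw [hV] at hu
    have : (fun g => (X g : MvPolynomial (Fin n) k)) '' V = X '' V := rfl
    rw [this, mem_ideal_span_X_image] at hu
    obtain ⟨g, hgV, hgu⟩ := hu u (by simp [support_monomial])
    have hgX : (X g : MvPolynomial (Fin n) k) ∈
        Submodule.colon
          (Ideal.span ((fun l => monomial (m l) (1 : k)) '' {l | l < i}))
          (Ideal.span {monomial (m i) (1 : k)}) := by
      rw [hV]; exact Ideal.subset_span ⟨g, hgV, rfl⟩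
    exact hqs g (Finsupp.mem_support_iff.mpr hgu) hgX
  rintro ⟨l, v⟩ hq
  rcases lt_trichotomy l p.1 with h | h | h
  · exact (huniq p (l, v) hp hq h).elim
  · have : v = p.2 := by
      have h1 := hp.1
      have h2 := hq.1
      rw [h] at h2
      have := h1.symm.trans h2
      exact (add_right_cancel this.symm)
    exact Prod.ext h this
  · exact (huniq (l, v) p hq hp h).elim
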